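/- Let f be a probability measure on ℝ^d × ℝ^d and for each i = 1,…,N let π_i be a Markov kernel in the velocity variable, λ_i ∈ [0,1] with Σλ_i = 1 and Σλ_i π_i a martingale kernel. Set t_0 = 0, t_i = Σ_{j≤i} λ_j. Suppose X_i : ℝ^d × ℝ^d × 𝕋¹ → ℝ^d are jointly measurable with ∫_{𝕋¹} δ_{X_i(x,v,θ)} dθ = π_i(x,v). Define for each (x₀,v₀,θ) the curve γ with constant position x₀, γ_v(0) = 0, and velocity derivative γ̇_v(s) = X_i(x₀,v₀, (s−t_i)/(t_{i+1}−t_i) + θ) for s ∈ (t_i, t_{i+1}). Then γ_v(1) = v₀ for every (x₀,v₀,θ), i.e. the constructed vertical tangent path returns to the original velocity. -/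

import Mathlib

open MeasureTheory

/-- The vertical tangent path constructed from random variables realizing the kernels
`π_i` on consecutive subintervals of lengths `λ_i` returns to the original velocity:
the total integral of its velocity derivative equals `v₀`. -/
theorem stmt19 (d N : ℕ)
    (π : ℕ → EuclideanSpace ℝ (Fin d) × EuclideanSpace ℝ (Fin d) →
      Measure (EuclideanSpace ℝ (Fin d)))
    (hπprob : ∀ i q, IsProbabilityMeasure (π i q))
    (l : ℕ → ℝ) (hl0 : ∀ i, 0 ≤ l i) (hl1 : ∑ i ∈ Finset.range N, l i = 1)
    -- Σ λ_i π_i is a martingale kernel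
    (hmart : ∀ q : EuclideanSpace ℝ (Fin d) × EuclideanSpace ℝ (Fin d),
      ∑ i ∈ Finset.range N, l i • (∫ v', v' ∂(π i q)) = q.2)
    (X : ℕ → EuclideanSpace ℝ (Fin d) × EuclideanSpace ℝ (Fin d) →
      AddCircle (1 : ℝ) → EuclideanSpace ℝ (Fin d))
    (hXmeas : ∀ i, Measurable
      (fun w : (EuclideanSpace ℝ (Fin d) × EuclideanSpace ℝ (Fin d)) × AddCircle (1 : ℝ) =>
        X i w.1 w.2))
    (hXint : ∀ i q, Integrable (X i q) (volume : Measure (AddCircle (1 : ℝ))))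
    -- X_i(x,v,·) is distributed according to π_i(x,v) under the Haar measure on 𝕋¹
    (hXdist : ∀ i q, (volume : Measure (AddCircle (1 : ℝ))).map (X i q) = π i q)
    (q : EuclideanSpace ℝ (Fin d) × EuclideanSpace ℝ (Fin d))
    (θ : AddCircle (1 : ℝ)) :
    ∑ i ∈ Finset.range N,
      (∫ s in (∑ j ∈ Finset.range i, l j)..(∑ j ∈ Finset.range (i + 1), l j),
        X i q ((((s - ∑ j ∈ Finset.range i, l j) / l i : ℝ) : AddCircle (1 : ℝ)) + θ)) =
      q.2 := by
  rw [← hmart q]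
  refine Finset.sum_congr rfl fun i _ => ?_
  rw [Finset.sum_range_succ]
  set t : ℝ := ∑ j ∈ Finset.range i, l j with ht
  by_cases hli : l i = 0
  · simp [hli, intervalIntegral.integral_same]
  · have hXm : Measurable (X i q) := (hXmeas i).comp (measurable_const.prodMk measurable_id)
    set f : AddCircle (1 : ℝ) → EuclideanSpace ℝ (Fin d) := fun a => X i q (a + θ) with hf
    have h1 : (∫ s in t..(t + l i), X i q ((((s - t) / l i : ℝ) : AddCircle (1 : ℝ)) + θ))
        = l i • ∫ u in (0:ℝ)..1, f ((u : ℝ) : AddCircle (1 : ℝ)) := by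
      have key := intervalIntegral.integral_comp_div_sub
        (f := fun u : ℝ => f ((u : ℝ) : AddCircle (1 : ℝ))) (a := t) (b := t + l i)
        hli (t / l i)
      have e1 : t / l i - t / l i = 0 := sub_self _
      have e2 : (t + l i) / l i - t / l i = 1 := by field_simp; ring
      rw [e1, e2] at key
      simp_rw [sub_div]
      exact key
    have h2 : (∫ u in (0:ℝ)..1, f ((u : ℝ) : AddCircle (1 : ℝ)))
        = ∫ a : AddCircle (1 : ℝ), f a := by
      rw [intervalIntegral.integral_of_le (by norm_num : (0:ℝ) ≤ 1)]
      have := AddCircle.integral_preimage (1 : ℝ) 0 f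
      simpa using this
    have h3 : (∫ a : AddCircle (1 : ℝ), f a) = ∫ a : AddCircle (1 : ℝ), X i q a :=
      integral_add_right_eq_self (X i q) θ
    have h4 : (∫ a : AddCircle (1 : ℝ), X i q a) = ∫ v', v' ∂(π i q) := by
      rw [← hXdist i q, integral_map hXm.aemeasurable]
      exact aestronglyMeasurable_id
    rw [h1, h2, h3, h4]
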